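/- Let D₀ be a d×K real matrix with unit Euclidean-norm columns whose columns span ℝ^d, let X₀ be a K×N real matrix, Y = D₀·X₀, M₀ := D₀ᵀD₀ − I, and define the K×K matrix U := sign(X₀)·X₀ᵀ − M₀ᵀ·diag(‖x^k‖₁)_{k=1,…,K}. If there exist a K×K zero-diagonal matrix Z and a K×N matrix V with D₀·V = 0 such that Z·X₀ + V ≠ 0 and |⟨Z, U⟩_F + ⟨V, sign(X₀)⟩_F| > ‖(Z·X₀ + V)_Λ‖₁, then (D₀,X₀) is NOT a local minimum of problem (P1'). -/

import Mathlib

open Matrix Finset Filter Topology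

noncomputable section

/-- Entrywise ℓ1 norm of a matrix: the sum of absolute values of all entries. -/
def l1Norm {m n : Type*} [Fintype m] [Fintype n] (X : Matrix m n ℝ) : ℝ :=
  ∑ i, ∑ j, |X i j|

/-- The dictionary has unit Euclidean-norm columns. -/
def UnitCols {d K : ℕ} (D : Matrix (Fin d) (Fin K) ℝ) : Prop :=
  ∀ k, ∑ i, (D i k) ^ 2 = 1

/-- `(D₀, X₀)` is a local minimum of problem (P1'). -/
def IsLocalMinP1 {d K N : ℕ} (Y : Matrix (Fin d) (Fin N) ℝ)
    (D₀ : Matrix (Fin d) (Fin K) ℝ) (X₀ : Matrix (Fin K) (Fin N) ℝ) : Prop :=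
  ∃ U ∈ nhds (D₀, X₀), ∀ DX ∈ U, UnitCols DX.1 → DX.1 * DX.2 = Y →
    l1Norm X₀ ≤ l1Norm DX.2

/-- Entrywise sign of a matrix (with `sign 0 = 0`). -/
def signM {m n : Type*} (X : Matrix m n ℝ) : Matrix m n ℝ :=
  Matrix.of fun i j => Real.sign (X i j)

/-- Frobenius inner product `⟨A, B⟩_F = trace(Aᵀ B)`. -/
def frob {m n : Type*} [Fintype m] [Fintype n] (A B : Matrix m n ℝ) : ℝ :=
  Matrix.trace (Aᵀ * B)

/-- `‖A_Λ‖₁`: the ℓ1 norm of `A` restricted to the indices where `X₀` vanishes. -/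
def l1OnZeros {K N : ℕ} (X₀ A : Matrix (Fin K) (Fin N) ℝ) : ℝ :=
  ∑ k, ∑ n, if X₀ k n = 0 then |A k n| else 0

/-- The matrix `U := sign(X₀)·X₀ᵀ − M₀ᵀ·diag(‖x^k‖₁)_k`, where `M₀ = D₀ᵀD₀ − I`. -/
def Umatrix {d K N : ℕ} (D₀ : Matrix (Fin d) (Fin K) ℝ)
    (X₀ : Matrix (Fin K) (Fin N) ℝ) : Matrix (Fin K) (Fin K) ℝ :=
  signM X₀ * X₀ᵀ - (D₀ᵀ * D₀ - 1)ᵀ * Matrix.diagonal (fun k => ∑ n, |X₀ k n|)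

namespace Stmt8Aux

lemma sign_mul_self (x : ℝ) : Real.sign x * x = |x| := by
  rcases lt_trichotomy x 0 with h | h | h
  · rw [Real.sign_of_neg h, abs_of_neg h]; ring
  · simp [h]
  · rw [Real.sign_of_pos h, abs_of_pos h]; ring

lemma abs_entry (b a : ℝ) (h : b ≠ 0 → |a| ≤ |b|) :
    |b + a| ≤ |b| + Real.sign b * a + (if b = 0 then |a| else 0) := by
  rcases lt_trichotomy b 0 with hb | hb | hb
  · have h' := h hb.ne
    rw [abs_of_neg hb] at h'
    obtain ⟨h1, h2⟩ := abs_le.mp h'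
    rw [Real.sign_of_neg hb, if_neg hb.ne, abs_of_neg hb,
      abs_of_nonpos (by linarith : b + a ≤ 0)]
    ring_nf
    linarith
  · simp [hb]
  · have h' := h hb.ne'
    rw [abs_of_pos hb] at h'
    obtain ⟨h1, h2⟩ := abs_le.mp h'
    rw [Real.sign_of_pos hb, if_neg hb.ne', abs_of_pos hb,
      abs_of_nonneg (by linarith : 0 ≤ b + a)]
    ring_nf
    linarith

lemma frob_eq {m n : Type*} [Fintype m] [Fintype n] (A B : Matrix m n ℝ) :
    frob A B = ∑ i, ∑ j, A i j * B i j := by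
  simp only [frob, Matrix.trace, Matrix.diag, Matrix.mul_apply, Matrix.transpose_apply]
  exact Finset.sum_comm

lemma frob_sub {m n : Type*} [Fintype m] [Fintype n] (A B C : Matrix m n ℝ) :
    frob A (B - C) = frob A B - frob A C := by
  simp [frob, Matrix.mul_sub]

lemma contAt_sum {ι : Type*} (s : Finset ι) (f : ι → ℝ → ℝ) (x : ℝ)
    (h : ∀ i ∈ s, ContinuousAt (f i) x) :
    ContinuousAt (fun t => ∑ i ∈ s, f i t) x := tendsto_finset_sum s h

variable {d K N : ℕ} (D₀ : Matrix (Fin d) (Fin K) ℝ) (X₀ : Matrix (Fin K) (Fin N) ℝ)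
  (Z : Matrix (Fin K) (Fin K) ℝ) (V : Matrix (Fin K) (Fin N) ℝ)

def MZ (t : ℝ) : Matrix (Fin K) (Fin K) ℝ := 1 - t • Z

/-- `m_k = (D₀ᵀ D₀ Z)_{kk}`. -/
def mm (k : Fin K) : ℝ := (D₀ᵀ * D₀ * Z) k k

def ss (k : Fin K) : ℝ := ∑ i, ((D₀ * Z) i k) ^ 2

def qq (t : ℝ) (k : Fin K) : ℝ := 1 - 2 * t * mm D₀ Z k + t ^ 2 * ss D₀ Z k

def cc (t : ℝ) (k : Fin K) : ℝ := Real.sqrt (qq D₀ Z t k)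

def ps (t : ℝ) (k : Fin K) : ℝ :=
  (-(2 * mm D₀ Z k) + t * ss D₀ Z k) / (cc D₀ Z t k + 1)

def BB (t : ℝ) : Matrix (Fin K) (Fin K) ℝ :=
  ((MZ Z t).det)⁻¹ • (MZ Z t).adjugate

def DD (t : ℝ) : Matrix (Fin d) (Fin K) ℝ :=
  Matrix.of fun i k => (D₀ * (MZ Z t)) i k / cc D₀ Z t k

def XX (t : ℝ) : Matrix (Fin K) (Fin N) ℝ :=
  Matrix.of fun k n => cc D₀ Z t k * ((BB Z t) * (X₀ + t • V)) k n

def HH (t : ℝ) : Matrix (Fin K) (Fin N) ℝ :=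
  Matrix.of fun k n => ps D₀ Z t k * X₀ k n + cc D₀ Z t k * V k n
    + cc D₀ Z t k * ((Z * (BB Z t * (X₀ + t • V))) k n)

lemma q_zero (k : Fin K) : qq D₀ Z 0 k = 1 := by simp [qq]

lemma c_zero (k : Fin K) : cc D₀ Z 0 k = 1 := by
  simp [cc, q_zero]

lemma c_nonneg (t : ℝ) (k : Fin K) : 0 ≤ cc D₀ Z t k := Real.sqrt_nonneg _

lemma sum_sq (hunit : UnitCols D₀) (t : ℝ) (k : Fin K) :
    ∑ i, ((D₀ * (MZ Z t)) i k) ^ 2 = qq D₀ Z t k := by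
  have hE : ∀ i, (D₀ * (MZ Z t)) i k = D₀ i k - t * (D₀ * Z) i k := by
    intro i
    rw [MZ, Matrix.mul_sub, Matrix.mul_one, Matrix.mul_smul]
    simp [Matrix.sub_apply, Matrix.smul_apply]
  have hm : (D₀ᵀ * D₀ * Z) k k = ∑ i, D₀ i k * (D₀ * Z) i k := by
    rw [Matrix.mul_assoc, Matrix.mul_apply]
    simp [Matrix.transpose_apply]
  calc ∑ i, ((D₀ * (MZ Z t)) i k) ^ 2
      = ∑ i, ((D₀ i k) ^ 2 - 2 * t * (D₀ i k * (D₀ * Z) i k)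
          + t ^ 2 * ((D₀ * Z) i k) ^ 2) :=
        Finset.sum_congr rfl fun i _ => by rw [hE i]; ring
    _ = (∑ i, (D₀ i k) ^ 2) - 2 * t * (∑ i, D₀ i k * (D₀ * Z) i k)
          + t ^ 2 * ∑ i, ((D₀ * Z) i k) ^ 2 := by
        rw [Finset.sum_add_distrib, Finset.sum_sub_distrib, ← Finset.mul_sum, ← Finset.mul_sum]
    _ = qq D₀ Z t k := by rw [hunit k, qq, mm, ss, hm]

lemma c_eq (t : ℝ) (k : Fin K) (hq : 0 ≤ qq D₀ Z t k) :
    cc D₀ Z t k = 1 + t * ps D₀ Z t k := by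
  have h0 : 0 ≤ cc D₀ Z t k := Real.sqrt_nonneg _
  have hne : cc D₀ Z t k + 1 ≠ 0 := by positivity
  have hsq : cc D₀ Z t k ^ 2 = qq D₀ Z t k := Real.sq_sqrt hq
  rw [qq] at hsq
  have h2 : t * ps D₀ Z t k = cc D₀ Z t k - 1 := by
    rw [ps, mul_div_assoc', div_eq_iff hne]
    linear_combination -hsq
  linarith

lemma B_mul (t : ℝ) (hdet : (MZ Z t).det ≠ 0) :
    (MZ Z t) * BB Z t = 1 := by
  rw [BB, Matrix.mul_smul, Matrix.mul_adjugate, smul_smul, inv_mul_cancel₀ hdet, one_smul]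

lemma B_rec (t : ℝ) (hdet : (MZ Z t).det ≠ 0) :
    BB Z t = 1 + t • (Z * BB Z t) := by
  have h := B_mul Z t hdet
  rw [MZ, Matrix.sub_mul, Matrix.one_mul, Matrix.smul_mul, sub_eq_iff_eq_add] at h
  exact h

lemma B_zero : BB Z 0 = 1 := by
  simp [BB, MZ]

lemma X_zero : XX D₀ X₀ Z V 0 = X₀ := by
  ext k n
  simp [XX, B_zero, c_zero]

lemma D_zero : DD D₀ Z 0 = D₀ := by
  ext i k
  simp [DD, MZ, c_zero]

lemma X_eq (t : ℝ) (hdet : (MZ Z t).det ≠ 0) (hq : ∀ k, 0 ≤ qq D₀ Z t k) :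
    XX D₀ X₀ Z V t = X₀ + t • HH D₀ X₀ Z V t := by
  have hrec := B_rec Z t hdet
  ext k n
  have hBP : (BB Z t * (X₀ + t • V)) k n
      = (X₀ + t • V) k n + t * (Z * (BB Z t * (X₀ + t • V))) k n := by
    conv_lhs => rw [hrec]
    rw [Matrix.add_mul, Matrix.one_mul, Matrix.smul_mul, Matrix.add_apply,
      Matrix.smul_apply, smul_eq_mul, Matrix.mul_assoc]
  simp only [XX, HH, Matrix.of_apply, Matrix.add_apply, Matrix.smul_apply, smul_eq_mul]
  rw [hBP, c_eq D₀ Z t k (hq k)]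
  simp only [Matrix.add_apply, Matrix.smul_apply, smul_eq_mul]
  ring

lemma H_zero_apply (k : Fin K) (n : Fin N) :
    HH D₀ X₀ Z V 0 k n = (Z * X₀) k n + V k n + (-(mm D₀ Z k)) * X₀ k n := by
  simp only [HH, Matrix.of_apply, B_zero, c_zero, ps, c_zero, qq]
  simp [mul_comm]
  ring

lemma l1_H_zero : l1OnZeros X₀ (HH D₀ X₀ Z V 0) = l1OnZeros X₀ (Z * X₀ + V) := by
  refine Finset.sum_congr rfl fun k _ => Finset.sum_congr rfl fun n _ => ?_
  by_cases hx : X₀ k n = 0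
  · rw [if_pos hx, if_pos hx, H_zero_apply, hx]
    simp [Matrix.add_apply]
  · rw [if_neg hx, if_neg hx]

lemma T1 : ∑ k, ∑ n, signM X₀ k n * (Z * X₀) k n = frob Z (signM X₀ * X₀ᵀ) := by
  rw [frob_eq]
  calc ∑ k, ∑ n, signM X₀ k n * (Z * X₀) k n
      = ∑ i, ∑ j, Z i j * ∑ n, Real.sign (X₀ i n) * X₀ j n := by
        simp only [Matrix.mul_apply, signM, Matrix.of_apply, Finset.mul_sum]
        refine Finset.sum_congr rfl fun i _ => ?_
        rw [Finset.sum_comm]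
        exact Finset.sum_congr rfl fun j _ => Finset.sum_congr rfl fun n _ => by ring
    _ = ∑ i, ∑ j, Z i j * (signM X₀ * X₀ᵀ) i j := by
        simp only [Matrix.mul_apply, signM, Matrix.of_apply, Matrix.transpose_apply]

lemma T2 : ∑ k, ∑ n, signM X₀ k n * V k n = frob V (signM X₀) := by
  rw [frob_eq]
  exact Finset.sum_congr rfl fun k _ => Finset.sum_congr rfl fun n _ => mul_comm _ _

lemma T3 (hZ : ∀ k, Z k k = 0) :
    ∑ k, ∑ n, signM X₀ k n * (-(mm D₀ Z k) * X₀ k n)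
      = - frob Z ((D₀ᵀ * D₀ - 1)ᵀ * Matrix.diagonal (fun k => ∑ n, |X₀ k n|)) := by
  have lhs : ∀ k, ∑ n, signM X₀ k n * (-(mm D₀ Z k) * X₀ k n)
      = -(mm D₀ Z k) * ∑ n, |X₀ k n| := by
    intro k
    rw [Finset.mul_sum]
    refine Finset.sum_congr rfl fun n _ => ?_
    rw [← sign_mul_self (X₀ k n)]
    simp only [signM, Matrix.of_apply]
    ring
  have hentry : ∀ i j, (((D₀ᵀ * D₀ - 1)ᵀ * Matrix.diagonal (fun k => ∑ n, |X₀ k n|) :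
      Matrix (Fin K) (Fin K) ℝ)) i j
      = ((D₀ᵀ * D₀) j i - (1 : Matrix (Fin K) (Fin K) ℝ) j i) * ∑ n, |X₀ j n| := by
    intro i j
    rw [Matrix.mul_diagonal, Matrix.transpose_apply, Matrix.sub_apply]
  have hf : frob Z ((D₀ᵀ * D₀ - 1)ᵀ * Matrix.diagonal (fun k => ∑ n, |X₀ k n|))
      = ∑ j, mm D₀ Z j * ∑ n, |X₀ j n| := by
    rw [frob_eq, Finset.sum_comm]
    refine Finset.sum_congr rfl fun j _ => ?_
    rw [Finset.sum_congr rfl fun i (_ : i ∈ Finset.univ) => by rw [hentry i j]]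
    have h1 : ∑ i, Z i j * ((1 : Matrix (Fin K) (Fin K) ℝ) j i * ∑ n, |X₀ j n|)
        = Z j j * ∑ n, |X₀ j n| := by
      rw [Finset.sum_eq_single j]
      · simp [Matrix.one_apply]
      · intro i _ hij
        simp [Matrix.one_apply, (Ne.symm hij : ¬ j = i)]
      · simp
    have h2 : ∑ i, Z i j * (((D₀ᵀ * D₀) j i - (1 : Matrix (Fin K) (Fin K) ℝ) j i)
        * ∑ n, |X₀ j n|)
        = (∑ i, (D₀ᵀ * D₀) j i * Z i j) * (∑ n, |X₀ j n|)
          - ∑ i, Z i j * ((1 : Matrix (Fin K) (Fin K) ℝ) j i * ∑ n, |X₀ j n|) := by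
      rw [Finset.sum_mul, ← Finset.sum_sub_distrib]
      refine Finset.sum_congr rfl fun i _ => ?_
      ring
    rw [h2, h1, hZ j, zero_mul, sub_zero, mm, Matrix.mul_apply]
  rw [hf, Finset.sum_congr rfl fun k (_ : k ∈ Finset.univ) => lhs k,
    ← Finset.sum_neg_distrib]
  exact Finset.sum_congr rfl fun k _ => by ring

lemma sign_H_zero (hZ : ∀ k, Z k k = 0) :
    ∑ k, ∑ n, signM X₀ k n * HH D₀ X₀ Z V 0 k n
      = frob Z (Umatrix D₀ X₀) + frob V (signM X₀) := by
  have hsplit : ∑ k, ∑ n, signM X₀ k n * HH D₀ X₀ Z V 0 k n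
      = (∑ k, ∑ n, signM X₀ k n * (Z * X₀) k n)
        + (∑ k, ∑ n, signM X₀ k n * V k n)
        + ∑ k, ∑ n, signM X₀ k n * (-(mm D₀ Z k) * X₀ k n) := by
    simp only [← Finset.sum_add_distrib]
    refine Finset.sum_congr rfl fun k _ => Finset.sum_congr rfl fun n _ => ?_
    rw [H_zero_apply]
    ring
  rw [hsplit, T1, T2, T3 D₀ X₀ Z hZ, Umatrix, frob_sub]
  ring

lemma hMcont : Continuous fun t : ℝ => MZ Z t := by
  apply continuous_matrix
  intro i j
  simp only [MZ, Matrix.sub_apply, Matrix.smul_apply, smul_eq_mul]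
  fun_prop

lemma cont_q (k : Fin K) : Continuous fun t => qq D₀ Z t k := by
  simp only [qq]; fun_prop

lemma cont_c (k : Fin K) : Continuous fun t => cc D₀ Z t k := by
  simp only [cc]
  exact Real.continuous_sqrt.comp (cont_q D₀ Z k)

lemma cont_ps (k : Fin K) : Continuous fun t => ps D₀ Z t k := by
  simp only [ps]
  refine Continuous.div (by fun_prop) ((cont_c D₀ Z k).add continuous_const) ?_
  intro t
  have := c_nonneg D₀ Z t k
  intro hcon
  linarith

lemma cont_B (i j : Fin K) : ContinuousAt (fun t => BB Z t i j) 0 := by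
  simp only [BB, Matrix.smul_apply, smul_eq_mul]
  have h1 : ContinuousAt (fun t => ((MZ Z t).det)⁻¹) 0 := by
    apply ContinuousAt.inv₀ ((hMcont Z).matrix_det.continuousAt)
    simp [MZ]
  exact h1.mul ((hMcont Z).matrix_adjugate.matrix_elem i j).continuousAt

lemma cont_P (j : Fin K) (n : Fin N) :
    ContinuousAt (fun t => (BB Z t * (X₀ + t • V)) j n) 0 := by
  simp only [Matrix.mul_apply, Matrix.add_apply, Matrix.smul_apply, smul_eq_mul]
  apply contAt_sum
  intro r _
  exact (cont_B Z j r).mul (by fun_prop)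

lemma cont_Q (k : Fin K) (n : Fin N) :
    ContinuousAt (fun t => (Z * (BB Z t * (X₀ + t • V))) k n) 0 := by
  have hfun : (fun t => (Z * (BB Z t * (X₀ + t • V))) k n)
      = fun t => ∑ j, Z k j * (BB Z t * (X₀ + t • V)) j n := by
    funext t; rw [Matrix.mul_apply]
  rw [hfun]
  apply contAt_sum
  intro j _
  exact continuousAt_const.mul (cont_P X₀ Z V j n)

lemma cont_H (k : Fin K) (n : Fin N) :
    ContinuousAt (fun t => HH D₀ X₀ Z V t k n) 0 := by
  simp only [HH, Matrix.of_apply]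
  exact (((cont_ps D₀ Z k).continuousAt.mul continuousAt_const).add
    ((cont_c D₀ Z k).continuousAt.mul continuousAt_const)).add
    ((cont_c D₀ Z k).continuousAt.mul (cont_Q X₀ Z V k n))

lemma cont_D : ContinuousAt (DD D₀ Z) 0 := by
  apply continuousAt_pi.2; intro i
  apply continuousAt_pi.2; intro k
  simp only [DD, Matrix.of_apply]
  apply ContinuousAt.div
  · exact ((continuous_const.matrix_mul (hMcont Z)).matrix_elem i k).continuousAt
  · exact (cont_c D₀ Z k).continuousAt
  · rw [c_zero]; norm_num

lemma cont_X : ContinuousAt (XX D₀ X₀ Z V) 0 := by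
  apply continuousAt_pi.2; intro k
  apply continuousAt_pi.2; intro n
  simp only [XX, Matrix.of_apply]
  exact (cont_c D₀ Z k).continuousAt.mul (cont_P X₀ Z V k n)

lemma key (hunit : UnitCols D₀) (hZ : ∀ k, Z k k = 0) (hV : D₀ * V = 0)
    (hlt : frob Z (Umatrix D₀ X₀) + frob V (signM X₀)
        + l1OnZeros X₀ (Z * X₀ + V) < 0) :
    ¬ IsLocalMinP1 (D₀ * X₀) D₀ X₀ := by
  classical
  rintro ⟨U, hU, hmin⟩
  set G : ℝ → ℝ := fun t =>
    (∑ k, ∑ n, signM X₀ k n * HH D₀ X₀ Z V t k n)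
      + ∑ k, ∑ n, if X₀ k n = 0 then |HH D₀ X₀ Z V t k n| else 0 with hGdef
  have hGc : ContinuousAt G 0 := by
    apply ContinuousAt.add
    · apply contAt_sum; intro k _; apply contAt_sum; intro n _
      exact continuousAt_const.mul (cont_H D₀ X₀ Z V k n)
    · apply contAt_sum; intro k _; apply contAt_sum; intro n _
      by_cases hx : X₀ k n = 0
      · simp only [if_pos hx]
        exact (cont_H D₀ X₀ Z V k n).abs
      · simp only [if_neg hx]
        exact continuousAt_const
  have hG0 : G 0 < 0 := by
    have hval : G 0 = frob Z (Umatrix D₀ X₀) + frob V (signM X₀)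
        + l1OnZeros X₀ (Z * X₀ + V) := by
      rw [hGdef]
      dsimp only
      rw [sign_H_zero D₀ X₀ Z V hZ,
        show (∑ k, ∑ n, if X₀ k n = 0 then |HH D₀ X₀ Z V 0 k n| else 0)
          = l1OnZeros X₀ (HH D₀ X₀ Z V 0) from rfl, l1_H_zero]
    rw [hval]; exact hlt
  have evA1 : ∀ᶠ t in 𝓝 (0:ℝ), (MZ Z t).det ≠ 0 :=
    ((hMcont Z).matrix_det.continuousAt).eventually_ne (by simp [MZ])
  have evA2 : ∀ᶠ t in 𝓝 (0:ℝ), ∀ k, 0 < qq D₀ Z t k := by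
    rw [Filter.eventually_all]
    intro k
    exact (cont_q D₀ Z k).continuousAt.eventually_const_lt
      (show (0:ℝ) < qq D₀ Z 0 k by rw [q_zero]; norm_num)
  have evA3 : ∀ᶠ t in 𝓝 (0:ℝ), ∀ k n, X₀ k n ≠ 0 →
      |t * HH D₀ X₀ Z V t k n| ≤ |X₀ k n| := by
    rw [Filter.eventually_all]; intro k; rw [Filter.eventually_all]; intro n
    by_cases hx : X₀ k n = 0
    · exact Filter.Eventually.of_forall fun t h => absurd hx h
    · have habs : 0 < |X₀ k n| := abs_pos.2 hx
      have hT : Tendsto (fun t => |t * HH D₀ X₀ Z V t k n|) (𝓝 0) (𝓝 0) := by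
        have h : Tendsto (fun t => |t * HH D₀ X₀ Z V t k n|) (𝓝 0)
            (𝓝 (|(0:ℝ) * HH D₀ X₀ Z V 0 k n|)) :=
          (continuousAt_id.mul (cont_H D₀ X₀ Z V k n)).abs
        simpa using h
      exact (hT.eventually_lt_const habs).mono fun t ht _ => ht.le
  have evA4 : ∀ᶠ t in 𝓝 (0:ℝ), G t < 0 := hGc.eventually_lt_const hG0
  have evA5 : ∀ᶠ t in 𝓝 (0:ℝ), (DD D₀ Z t, XX D₀ X₀ Z V t) ∈ U := by
    have h1 := (cont_D D₀ Z).prodMk (cont_X D₀ X₀ Z V)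
    have h2 : Tendsto (fun t => (DD D₀ Z t, XX D₀ X₀ Z V t)) (𝓝 0)
        (𝓝 (DD D₀ Z 0, XX D₀ X₀ Z V 0)) := h1
    rw [D_zero, X_zero] at h2
    exact h2 hU
  have hall := evA1.and (evA2.and (evA3.and (evA4.and evA5)))
  obtain ⟨t, htpos, hA1, hA2, hA3, hA4, hA5⟩ :=
    (eventually_mem_nhdsWithin.and
      (hall.filter_mono (nhdsWithin_le_nhds (s := Set.Ioi (0:ℝ))))).exists
  replace htpos : (0:ℝ) < t := htpos
  have hqpos : ∀ k, 0 < qq D₀ Z t k := hA2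
  have hc : ∀ k, 0 < cc D₀ Z t k := fun k => Real.sqrt_pos.2 (hqpos k)
  have hcols : UnitCols (DD D₀ Z t) := by
    intro k
    have h1 : ∑ i, (DD D₀ Z t i k) ^ 2
        = (∑ i, ((D₀ * MZ Z t) i k) ^ 2) / (cc D₀ Z t k) ^ 2 := by
      rw [Finset.sum_div]
      refine Finset.sum_congr rfl fun i _ => ?_
      rw [DD, Matrix.of_apply, div_pow]
    rw [h1, sum_sq D₀ Z hunit t k,
      show (cc D₀ Z t k) ^ 2 = qq D₀ Z t k from Real.sq_sqrt (hqpos k).le,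
      div_self (hqpos k).ne']
  have hmat : (D₀ * MZ Z t) * (BB Z t * (X₀ + t • V)) = D₀ * X₀ := by
    rw [Matrix.mul_assoc, ← Matrix.mul_assoc (MZ Z t), B_mul Z t hA1, Matrix.one_mul,
      Matrix.mul_add, Matrix.mul_smul, hV, smul_zero, add_zero]
  have hdivmul : ∀ a b cv : ℝ, cv ≠ 0 → a / cv * (cv * b) = a * b := by
    intro a b cv h
    field_simp
  have hprod : DD D₀ Z t * XX D₀ X₀ Z V t = D₀ * X₀ := by
    ext i n
    rw [← hmat, Matrix.mul_apply, Matrix.mul_apply]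
    refine Finset.sum_congr rfl fun k _ => ?_
    simp only [DD, XX, Matrix.of_apply]
    exact hdivmul _ _ _ (hc k).ne'
  have hXt : XX D₀ X₀ Z V t = X₀ + t • HH D₀ X₀ Z V t :=
    X_eq D₀ X₀ Z V t hA1 fun k => (hqpos k).le
  have hle : l1Norm (XX D₀ X₀ Z V t) ≤ l1Norm X₀ + t * G t := by
    rw [hXt]
    have e1 : ∀ (k : Fin K) (n : Fin N), Real.sign (X₀ k n) * (t * HH D₀ X₀ Z V t k n)
        = t * (signM X₀ k n * HH D₀ X₀ Z V t k n) := by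
      intro k n; simp only [signM, Matrix.of_apply]; ring
    have e2 : ∀ (k : Fin K) (n : Fin N),
        (if X₀ k n = 0 then |t * HH D₀ X₀ Z V t k n| else 0)
        = t * (if X₀ k n = 0 then |HH D₀ X₀ Z V t k n| else 0) := by
      intro k n
      rw [abs_mul, abs_of_pos htpos]
      split_ifs <;> ring
    calc l1Norm (X₀ + t • HH D₀ X₀ Z V t)
        ≤ ∑ k, ∑ n, (|X₀ k n| + Real.sign (X₀ k n) * (t * HH D₀ X₀ Z V t k n)
            + if X₀ k n = 0 then |t * HH D₀ X₀ Z V t k n| else 0) := by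
          rw [l1Norm]
          refine Finset.sum_le_sum fun k _ => Finset.sum_le_sum fun n _ => ?_
          have h := abs_entry (X₀ k n) (t * HH D₀ X₀ Z V t k n)
            (fun hx => hA3 k n hx)
          simpa [Matrix.add_apply, Matrix.smul_apply, smul_eq_mul] using h
      _ = l1Norm X₀ + t * G t := by
          simp only [Finset.sum_add_distrib, e1, e2, ← Finset.mul_sum]
          rw [l1Norm, hGdef]
          ring
  have hfinal : l1Norm X₀ ≤ l1Norm (XX D₀ X₀ Z V t) :=
    hmin (DD D₀ Z t, XX D₀ X₀ Z V t) hA5 hcols hprod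
  have hneg : t * G t < 0 := mul_neg_of_pos_of_neg htpos hA4
  linarith

end Stmt8Aux

/-- **Lemma (necessary condition).** If there exist a zero-diagonal `Z` and a `V` with
`D₀·V = 0` such that `Z·X₀ + V ≠ 0` and `|⟨Z,U⟩_F + ⟨V, sign(X₀)⟩_F| > ‖(Z·X₀ + V)_Λ‖₁`,
then `(D₀,X₀)` is NOT a local minimum of (P1'). -/
theorem stmt8 {d K N : ℕ} (D₀ : Matrix (Fin d) (Fin K) ℝ)
    (X₀ : Matrix (Fin K) (Fin N) ℝ) (Y : Matrix (Fin d) (Fin N) ℝ)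
    (hY : Y = D₀ * X₀)
    (hunit : UnitCols D₀)
    (hcomplete : Function.Surjective D₀.mulVec)
    (h : ∃ (Z : Matrix (Fin K) (Fin K) ℝ) (V : Matrix (Fin K) (Fin N) ℝ),
      (∀ k, Z k k = 0) ∧ D₀ * V = 0 ∧ Z * X₀ + V ≠ 0 ∧
        |frob Z (Umatrix D₀ X₀) + frob V (signM X₀)| > l1OnZeros X₀ (Z * X₀ + V)) :
    ¬ IsLocalMinP1 Y D₀ X₀ := by
  obtain ⟨Z, V, hZ, hV, -, habs⟩ := h
  subst hY
  rcases le_or_gt (frob Z (Umatrix D₀ X₀) + frob V (signM X₀)) 0 with hα | hα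
  · apply Stmt8Aux.key D₀ X₀ Z V hunit hZ hV
    rw [abs_of_nonpos hα] at habs
    linarith
  · have h1 : frob (-Z) (Umatrix D₀ X₀) = -frob Z (Umatrix D₀ X₀) := by
      simp [frob, Matrix.transpose_neg, Matrix.neg_mul]
    have h2 : frob (-V) (signM X₀) = -frob V (signM X₀) := by
      simp [frob, Matrix.transpose_neg, Matrix.neg_mul]
    have h3 : (-Z) * X₀ + -V = -(Z * X₀ + V) := by rw [Matrix.neg_mul, neg_add]
    have h4 : l1OnZeros X₀ ((-Z) * X₀ + -V) = l1OnZeros X₀ (Z * X₀ + V) := by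
      simp only [l1OnZeros, h3, Matrix.neg_apply, abs_neg]
    apply Stmt8Aux.key D₀ X₀ (-Z) (-V) hunit (fun k => by simp [hZ k])
      (by rw [Matrix.mul_neg, hV, neg_zero])
    rw [h1, h2, h4]
    rw [abs_of_pos hα] at habs
    linarith
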